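/- Lemma 4 (convergence of the expected Q-values from scalar multiples of c*): suppose additionally that p q ≥ p_min for all q for some p_min > 0, that ∑_i λ i = ∞ (the series of learning rates diverges), and that Q_0 = κ • c* for some scalar κ ≥ 0. Then the expected Q-learning iterates converge to the fixed point: Q_i q → c* q as i → ∞, for every q. -/

import Mathlib

open Filter Matrix

/-- Lemma 4: if each entry is updated with probability at least `p_min > 0`,
the learning rates sum to infinity, and `Q 0 = κ • c*` for some `κ ≥ 0`, then
the expected Q-learning iterates converge to the fixed point `c*`. -/
theorem expected_q_values_converge_scalar {n : ℕ}
    (B : Matrix (Fin n) (Fin n) ℝ) (hB : ∀ i j, 0 ≤ B i j)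
    (hpow : ∀ i j, Tendsto (fun k => (B ^ k) i j) atTop (nhds 0))
    (c : Fin n → ℝ) (hc : ∀ i, 0 < c i)
    (cstar : Fin n → ℝ) (hcstar : cstar = B.mulVec cstar + c)
    (lam : ℕ → ℝ) (hlam : ∀ i, 0 ≤ lam i ∧ lam i ≤ 1)
    (hlamdiv : Tendsto (fun N => ∑ i ∈ Finset.range N, lam i) atTop atTop)
    (p : Fin n → ℝ) (hp : ∀ q, 0 < p q ∧ p q ≤ 1)
    (pmin : ℝ) (hpmin : 0 < pmin) (hppmin : ∀ q, pmin ≤ p q)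
    (Q : ℕ → Fin n → ℝ)
    (hQ : ∀ i q, Q (i + 1) q
      = (1 - lam i * p q) * Q i q + lam i * p q * (B.mulVec (Q i) + c) q)
    (κ : ℝ) (hκ : 0 ≤ κ) (hQ0 : Q 0 = κ • cstar) :
    ∀ q, Tendsto (fun i => Q i q) atTop (nhds (cstar q)) := by
  intro q₀
  have hne : (Finset.univ : Finset (Fin n)).Nonempty := ⟨q₀, Finset.mem_univ _⟩
  -- powers of B are nonnegative
  have hBk : ∀ k i j, 0 ≤ (B ^ k) i j := by
    intro k
    induction k with
    | zero => intro i j; simp [Matrix.one_apply]; positivity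
    | succ k ih =>
      intro i j
      rw [pow_succ, Matrix.mul_apply]
      exact Finset.sum_nonneg fun l _ => mul_nonneg (ih i l) (hB l j)
  -- Neumann-series identity
  have h2 : B.mulVec cstar = cstar - c := by
    rw [eq_sub_iff_add_eq, ← hcstar]
  have hiter : ∀ N q, cstar q = (∑ k ∈ Finset.range N, ((B ^ k).mulVec c) q)
      + ((B ^ N).mulVec cstar) q := by
    intro N
    induction N with
    | zero => intro q; simp [Matrix.one_mulVec]
    | succ N ih =>
      intro q
      have h1 : (B ^ (N + 1)).mulVec cstar
          = (B ^ N).mulVec (B.mulVec cstar) := by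
        rw [pow_succ, ← Matrix.mulVec_mulVec]
      rw [Finset.sum_range_succ]
      have h3 := ih q
      rw [h1, h2, Matrix.mulVec_sub]
      simp only [Pi.sub_apply]
      linarith
  -- c* is nonnegative
  have hcsnn : ∀ q, 0 ≤ cstar q := by
    intro q
    have htail : Tendsto (fun N => ((B ^ N).mulVec cstar) q) atTop (nhds 0) := by
      have : ∀ N, ((B ^ N).mulVec cstar) q = ∑ j, (B ^ N) q j * cstar j := by
        intro N; rfl
      simp only [this]
      have h0 : (0 : ℝ) = ∑ j : Fin n, 0 * cstar j := by simp
      rw [h0]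
      exact tendsto_finset_sum _ fun j _ => (hpow q j).mul_const _
    have hle : ∀ N, ((B ^ N).mulVec cstar) q ≤ cstar q := by
      intro N
      have hthis := hiter N q
      have hnn : 0 ≤ ∑ k ∈ Finset.range N, ((B ^ k).mulVec c) q := by
        apply Finset.sum_nonneg
        intro k _
        have hrfl : ((B ^ k).mulVec c) q = ∑ j, (B ^ k) q j * c j := rfl
        rw [hrfl]
        exact Finset.sum_nonneg fun j _ => mul_nonneg (hBk k q j) (hc j).le
      linarith
    exact le_of_tendsto' htail hle
  -- B.mulVec cstar is nonnegative, so cstar ≥ c > 0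
  have hBcs : ∀ q, 0 ≤ (B.mulVec cstar) q := by
    intro q
    have hrfl : (B.mulVec cstar) q = ∑ j, B q j * cstar j := rfl
    rw [hrfl]
    exact Finset.sum_nonneg fun j _ => mul_nonneg (hB q j) (hcsnn j)
  have hcspos : ∀ q, 0 < cstar q := by
    intro q
    have := congrFun hcstar q
    simp only [Pi.add_apply] at this
    have := hBcs q; have := hc q; linarith
  have hccs : ∀ q, c q ≤ cstar q := by
    intro q
    have := congrFun hcstar q
    simp only [Pi.add_apply] at this
    have := hBcs q; linarith
  -- contraction factor δ
  set δ : ℝ := Finset.univ.inf' hne (fun q => c q / cstar q) with hδdef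
  have hδpos : 0 < δ := by
    rw [hδdef, Finset.lt_inf'_iff]
    intro q _; exact div_pos (hc q) (hcspos q)
  have hδle : ∀ q, δ * cstar q ≤ c q := by
    intro q
    have h1 : δ ≤ c q / cstar q := Finset.inf'_le _ (Finset.mem_univ q)
    rw [le_div_iff₀ (hcspos q)] at h1
    exact h1
  have hδ1 : δ ≤ 1 := by
    have := hδle q₀; have := hccs q₀; have := hcspos q₀
    nlinarith
  have hpmin1 : pmin ≤ 1 := le_trans (hppmin q₀) (hp q₀).2
  -- contracted Bellman: (B c*) q ≤ (1-δ) c* q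
  have hBcsle : ∀ q, (B.mulVec cstar) q ≤ (1 - δ) * cstar q := by
    intro q
    have := congrFun hcstar q
    simp only [Pi.add_apply] at this
    have := hδle q
    linarith
  -- the decaying bound
  set a : ℝ := pmin * δ with hadef
  have hapos : 0 < a := mul_pos hpmin hδpos
  have ha1 : a ≤ 1 := by nlinarith
  set M : ℕ → ℝ := fun i => |κ - 1| * ∏ j ∈ Finset.range i, (1 - lam j * a) with hMdef
  have hfacnn : ∀ j, 0 ≤ 1 - lam j * a := by
    intro j
    have h1 := (hlam j).1; have h2 := (hlam j).2
    nlinarith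
  have hMnn : ∀ i, 0 ≤ M i := by
    intro i
    exact mul_nonneg (abs_nonneg _) (Finset.prod_nonneg fun j _ => hfacnn j)
  have hMsucc : ∀ i, M (i + 1) = M i * (1 - lam i * a) := by
    intro i
    rw [hMdef]
    simp only
    rw [Finset.prod_range_succ, mul_assoc]
  -- main invariant
  have key : ∀ i q, |Q i q - cstar q| ≤ M i * cstar q := by
    intro i
    induction i with
    | zero =>
      intro q
      rw [hQ0]
      simp only [Pi.smul_apply, smul_eq_mul, hMdef, Finset.range_zero,
        Finset.prod_empty, mul_one]
      have : κ * cstar q - cstar q = (κ - 1) * cstar q := by ring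
      rw [this, abs_mul, abs_of_nonneg (hcsnn q)]
    | succ i ih =>
      intro q
      have hlp0 : 0 ≤ lam i * p q := mul_nonneg (hlam i).1 (hp q).1.le
      have hlp1 : lam i * p q ≤ 1 := by
        have := (hlam i).2; have := (hp q).2; have := (hlam i).1
        nlinarith
      have heq : Q (i + 1) q - cstar q
          = (1 - lam i * p q) * (Q i q - cstar q)
            + lam i * p q * ∑ j, B q j * (Q i j - cstar j) := by
        rw [hQ i q]
        have hcq := congrFun hcstar q
        simp only [Pi.add_apply] at hcq
        have h1 : (B.mulVec (Q i) + c) q = (∑ j, B q j * Q i j) + c q := rfl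
        have h2 : (B.mulVec cstar) q = ∑ j, B q j * cstar j := rfl
        have h3 : ∑ j, B q j * (Q i j - cstar j)
            = (∑ j, B q j * Q i j) - ∑ j, B q j * cstar j := by
          rw [← Finset.sum_sub_distrib]
          congr 1; funext j; ring
        rw [h1, h3, ← h2]
        nlinarith [hcq]
      rw [heq]
      have hsum : |∑ j, B q j * (Q i j - cstar j)| ≤ M i * ((B.mulVec cstar) q) := by
        calc |∑ j, B q j * (Q i j - cstar j)|
            ≤ ∑ j, |B q j * (Q i j - cstar j)| := Finset.abs_sum_le_sum_abs _ _
          _ ≤ ∑ j, B q j * (M i * cstar j) := by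
              apply Finset.sum_le_sum
              intro j _
              rw [abs_mul, abs_of_nonneg (hB q j)]
              exact mul_le_mul_of_nonneg_left (ih j) (hB q j)
          _ = M i * ∑ j, B q j * cstar j := by
              rw [Finset.mul_sum]; congr 1; funext j; ring
          _ = M i * ((B.mulVec cstar) q) := rfl
      have hBle : M i * ((B.mulVec cstar) q) ≤ M i * ((1 - δ) * cstar q) :=
        mul_le_mul_of_nonneg_left (hBcsle q) (hMnn i)
      calc |(1 - lam i * p q) * (Q i q - cstar q)
            + lam i * p q * ∑ j, B q j * (Q i j - cstar j)|
          ≤ |(1 - lam i * p q) * (Q i q - cstar q)|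
            + |lam i * p q * ∑ j, B q j * (Q i j - cstar j)| := abs_add_le _ _
        _ = (1 - lam i * p q) * |Q i q - cstar q|
            + lam i * p q * |∑ j, B q j * (Q i j - cstar j)| := by
            rw [abs_mul, abs_mul, abs_of_nonneg (by linarith : (0:ℝ) ≤ 1 - lam i * p q),
              abs_of_nonneg hlp0]
        _ ≤ (1 - lam i * p q) * (M i * cstar q)
            + lam i * p q * (M i * ((1 - δ) * cstar q)) := by
            have h1 := mul_le_mul_of_nonneg_left (ih q)
              (by linarith : (0:ℝ) ≤ 1 - lam i * p q)
            have h2 := mul_le_mul_of_nonneg_left (le_trans hsum hBle) hlp0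
            linarith
        _ = M i * cstar q * (1 - lam i * p q * δ) := by ring
        _ ≤ M i * cstar q * (1 - lam i * pmin * δ) := by
            have hmc : 0 ≤ M i * cstar q := mul_nonneg (hMnn i) (hcsnn q)
            have : lam i * pmin * δ ≤ lam i * p q * δ := by
              have h1 : lam i * pmin ≤ lam i * p q :=
                mul_le_mul_of_nonneg_left (hppmin q) (hlam i).1
              exact mul_le_mul_of_nonneg_right h1 hδpos.le
            nlinarith
        _ = M (i + 1) * cstar q := by rw [hMsucc]; rw [hadef]; ring
  -- M tends to 0
  have hMexp : ∀ i, M i ≤ |κ - 1| * Real.exp (-(a * ∑ j ∈ Finset.range i, lam j)) := by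
    intro i
    rw [hMdef]
    simp only
    apply mul_le_mul_of_nonneg_left _ (abs_nonneg _)
    calc (∏ j ∈ Finset.range i, (1 - lam j * a))
        ≤ ∏ j ∈ Finset.range i, Real.exp (-(lam j * a)) := by
          apply Finset.prod_le_prod
          · intro j _; exact hfacnn j
          · intro j _
            have := Real.add_one_le_exp (-(lam j * a)); linarith
      _ = Real.exp (∑ j ∈ Finset.range i, -(lam j * a)) := by
          rw [Real.exp_sum]
      _ = Real.exp (-(a * ∑ j ∈ Finset.range i, lam j)) := by
          congr 1
          rw [Finset.mul_sum, ← Finset.sum_neg_distrib]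
          congr 1; funext j; ring
  have hMtend : Tendsto M atTop (nhds 0) := by
    have hexp : Tendsto (fun i => |κ - 1| * Real.exp (-(a * ∑ j ∈ Finset.range i, lam j)))
        atTop (nhds 0) := by
      have h1 : Tendsto (fun i => -(a * ∑ j ∈ Finset.range i, lam j)) atTop atBot := by
        apply Tendsto.const_mul_atTop_of_neg (neg_neg_iff_pos.mpr hapos) at hlamdiv
        · simpa [neg_mul] using hlamdiv
      have h2 := (Real.tendsto_exp_atBot).comp h1
      have := h2.const_mul (|κ - 1|)
      simpa using this
    exact squeeze_zero hMnn hMexp hexp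
  -- conclude
  have hdiff : Tendsto (fun i => Q i q₀ - cstar q₀) atTop (nhds 0) := by
    apply squeeze_zero_norm (fun i => key i q₀)
    have := hMtend.mul_const (cstar q₀)
    simpa using this
  have := hdiff.add_const (cstar q₀)
  simpa using this
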